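/- Let $K$ be a field, let $r \in K^*$, and let $g = \begin{pmatrix} a & b \\ c & d \end{pmatrix} \in \mathrm{SL}_2(K)$ with $abcd \ne 0$. Then the product of the upper-right and lower-left entries of $g \begin{pmatrix} r & 0 \\ 0 & r^{-1} \end{pmatrix} g^{-1}$ equals $-(r - r^{-1})^2 abcd$; moreover, the map $r \mapsto -(r - r^{-1})^2 abcd$ on $K^*$ is at most 4-to-1, so for a set $V$ of diagonal matrices in $\mathrm{SL}_2(K)$ the set $\{h_{12} h_{21} : h \in gVg^{-1}\}$ has cardinality at least $|V|/4$. -/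

import Mathlib

open Finset Matrix Polynomial

lemma stmt16_part1 {K : Type*} [Field K]
    (g : Matrix.SpecialLinearGroup (Fin 2) K)
    (a b c d : K)
    (ha : (g : Matrix (Fin 2) (Fin 2) K) 0 0 = a)
    (hb : (g : Matrix (Fin 2) (Fin 2) K) 0 1 = b)
    (hc : (g : Matrix (Fin 2) (Fin 2) K) 1 0 = c)
    (hd : (g : Matrix (Fin 2) (Fin 2) K) 1 1 = d)
    (r : K) (D : Matrix.SpecialLinearGroup (Fin 2) K)
    (hD : (D : Matrix (Fin 2) (Fin 2) K) = !![r, 0; 0, r⁻¹]) :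
    ((g * D * g⁻¹ : Matrix.SpecialLinearGroup (Fin 2) K) : Matrix (Fin 2) (Fin 2) K) 0 1 *
      ((g * D * g⁻¹ : Matrix.SpecialLinearGroup (Fin 2) K) : Matrix (Fin 2) (Fin 2) K) 1 0
      = -(r - r⁻¹) ^ 2 * (a * b * c * d) := by
  simp only [Matrix.SpecialLinearGroup.coe_mul, Matrix.SpecialLinearGroup.coe_inv,
    Matrix.adjugate_fin_two, hD]
  simp [Matrix.mul_apply, Fin.sum_univ_succ, ha, hb, hc, hd]
  ring

lemma stmt16_part2 {K : Type*} [Field K] [DecidableEq K] (a b c d : K)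
    (habcd : a * b * c * d ≠ 0) (t : K) :
    ({r : K | r ≠ 0 ∧ -(r - r⁻¹) ^ 2 * (a * b * c * d) = t}).Finite ∧
        ({r : K | r ≠ 0 ∧ -(r - r⁻¹) ^ 2 * (a * b * c * d) = t}).ncard ≤ 4 := by
  set p : K[X] := C (a*b*c*d) * X^4 + C (t - 2*(a*b*c*d)) * X^2 + C (a*b*c*d) with hp
  have hp0 : p ≠ 0 := by
    intro h
    apply habcd
    have h4 : p.coeff 4 = a * b * c * d := by
      simp only [hp, coeff_add, coeff_C_mul, coeff_X_pow, coeff_C]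
      norm_num
    rw [h, coeff_zero] at h4
    exact h4.symm
  have hdeg : p.natDegree ≤ 4 := by
    unfold p
    compute_degree
  have hsub : {r : K | r ≠ 0 ∧ -(r - r⁻¹) ^ 2 * (a * b * c * d) = t} ⊆
      ↑p.roots.toFinset := by
    rintro r ⟨hr0, hrt⟩
    rw [Finset.mem_coe, Multiset.mem_toFinset, Polynomial.mem_roots hp0]
    rw [Polynomial.IsRoot, hp]
    simp only [eval_add, eval_mul, eval_C, eval_pow, eval_X]
    rw [← hrt]
    field_simp
    ring
  constructor
  · exact Set.Finite.subset p.roots.toFinset.finite_toSet hsub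
  · calc ({r : K | r ≠ 0 ∧ -(r - r⁻¹) ^ 2 * (a * b * c * d) = t}).ncard
        ≤ (↑p.roots.toFinset : Set K).ncard :=
          Set.ncard_le_ncard hsub p.roots.toFinset.finite_toSet
    _ = p.roots.toFinset.card := Set.ncard_coe_finset _
    _ ≤ Multiset.card p.roots := Multiset.toFinset_card_le _
    _ ≤ p.natDegree := Polynomial.card_roots' p
    _ ≤ 4 := hdeg

theorem stmt16 {K : Type*} [Field K] [DecidableEq K]
    [DecidableEq (Matrix.SpecialLinearGroup (Fin 2) K)]
    (g : Matrix.SpecialLinearGroup (Fin 2) K)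
    (a b c d : K)
    (ha : (g : Matrix (Fin 2) (Fin 2) K) 0 0 = a)
    (hb : (g : Matrix (Fin 2) (Fin 2) K) 0 1 = b)
    (hc : (g : Matrix (Fin 2) (Fin 2) K) 1 0 = c)
    (hd : (g : Matrix (Fin 2) (Fin 2) K) 1 1 = d)
    (habcd : a * b * c * d ≠ 0) :
    (∀ r : K, r ≠ 0 → ∀ D : Matrix.SpecialLinearGroup (Fin 2) K,
        (D : Matrix (Fin 2) (Fin 2) K) = !![r, 0; 0, r⁻¹] →
        ((g * D * g⁻¹ : Matrix.SpecialLinearGroup (Fin 2) K) : Matrix (Fin 2) (Fin 2) K) 0 1 *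
          ((g * D * g⁻¹ : Matrix.SpecialLinearGroup (Fin 2) K) : Matrix (Fin 2) (Fin 2) K) 1 0
          = -(r - r⁻¹) ^ 2 * (a * b * c * d)) ∧
    (∀ t : K, ({r : K | r ≠ 0 ∧ -(r - r⁻¹) ^ 2 * (a * b * c * d) = t}).Finite ∧
        ({r : K | r ≠ 0 ∧ -(r - r⁻¹) ^ 2 * (a * b * c * d) = t}).ncard ≤ 4) ∧
    (∀ V : Finset (Matrix.SpecialLinearGroup (Fin 2) K),
      (∀ v ∈ V, (v : Matrix (Fin 2) (Fin 2) K) 0 1 = 0 ∧ (v : Matrix (Fin 2) (Fin 2) K) 1 0 = 0) →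
      (((V.image (fun v => g * v * g⁻¹)).image
          (fun h : Matrix.SpecialLinearGroup (Fin 2) K =>
            (h : Matrix (Fin 2) (Fin 2) K) 0 1 * (h : Matrix (Fin 2) (Fin 2) K) 1 0)).card : ℝ)
        ≥ (V.card : ℝ) / 4) := by
  refine ⟨fun r _ D hD => stmt16_part1 g a b c d ha hb hc hd r D hD,
    fun t => stmt16_part2 a b c d habcd t, fun V hV => ?_⟩
  -- key facts about diagonal v ∈ V
  have hdiag : ∀ v ∈ V, (v : Matrix (Fin 2) (Fin 2) K) 0 0 ≠ 0 ∧
      (v : Matrix (Fin 2) (Fin 2) K) =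
        !![(v : Matrix (Fin 2) (Fin 2) K) 0 0, 0; 0, ((v : Matrix (Fin 2) (Fin 2) K) 0 0)⁻¹] := by
    intro v hv
    obtain ⟨h01, h10⟩ := hV v hv
    have hdet : (v : Matrix (Fin 2) (Fin 2) K) 0 0 * (v : Matrix (Fin 2) (Fin 2) K) 1 1 = 1 := by
      have := v.2
      rw [Matrix.det_fin_two] at this
      rw [h01, h10] at this
      simpa using this
    have h00 : (v : Matrix (Fin 2) (Fin 2) K) 0 0 ≠ 0 := by
      intro h; rw [h, zero_mul] at hdet; exact zero_ne_one hdet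
    refine ⟨h00, ?_⟩
    have h11 : (v : Matrix (Fin 2) (Fin 2) K) 1 1 = ((v : Matrix (Fin 2) (Fin 2) K) 0 0)⁻¹ := by
      field_simp
      linear_combination hdet
    ext i j
    fin_cases i <;> fin_cases j <;> simp [h01, h10, h11]
  -- the double image equals image of the composition
  rw [Finset.image_image]
  set F : Matrix.SpecialLinearGroup (Fin 2) K → K := fun v =>
    ((fun h : Matrix.SpecialLinearGroup (Fin 2) K =>
        (h : Matrix (Fin 2) (Fin 2) K) 0 1 * (h : Matrix (Fin 2) (Fin 2) K) 1 0) ∘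
      fun v => g * v * g⁻¹) v with hF
  have key : V.card ≤ 4 * (V.image F).card := by
    apply Finset.card_le_mul_card_image
    intro t _
    -- fiber injects (via v ↦ v 0 0) into the root set
    set S := {r : K | r ≠ 0 ∧ -(r - r⁻¹) ^ 2 * (a * b * c * d) = t} with hS
    obtain ⟨hSfin, hScard⟩ := stmt16_part2 a b c d habcd t
    have hmap : ∀ v ∈ V.filter (fun v => F v = t),
        (v : Matrix (Fin 2) (Fin 2) K) 0 0 ∈ hSfin.toFinset := by
      intro v hv
      rw [Finset.mem_filter] at hv
      obtain ⟨hvV, hvt⟩ := hv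
      obtain ⟨h00, hvmat⟩ := hdiag v hvV
      rw [Set.Finite.mem_toFinset]
      refine ⟨h00, ?_⟩
      rw [← stmt16_part1 g a b c d ha hb hc hd _ v hvmat]
      exact hvt
    have hinj : ∀ v ∈ V.filter (fun v => F v = t), ∀ w ∈ V.filter (fun v => F v = t),
        (v : Matrix (Fin 2) (Fin 2) K) 0 0 = (w : Matrix (Fin 2) (Fin 2) K) 0 0 → v = w := by
      intro v hv w hw hvw
      rw [Finset.mem_filter] at hv hw
      obtain ⟨_, hvmat⟩ := hdiag v hv.1
      obtain ⟨_, hwmat⟩ := hdiag w hw.1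
      apply Subtype.ext
      rw [hvmat, hwmat, hvw]
    calc (V.filter (fun v => F v = t)).card
        ≤ hSfin.toFinset.card := Finset.card_le_card_of_injOn _ hmap hinj
      _ = S.ncard := (Set.ncard_eq_toFinset_card S hSfin).symm
      _ ≤ 4 := hScard
  rw [ge_iff_le, div_le_iff₀ (by norm_num : (0:ℝ) < 4)]
  calc (V.card : ℝ) ≤ (4 * (V.image F).card : ℕ) := by exact_mod_cast key
    _ = (V.image F).card * 4 := by push_cast; ring
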